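/- Let (Ω, ℱ, P_p) be a product Bernoulli(p) space over a countable index set S, with the pointwise partial order on Ω = {0,1}^S. If A and B are increasing events (ω ∈ A and ω ≤ ω′ imply ω′ ∈ A, and similarly for B), then P_p(A ∩ B) ≥ P_p(A) · P_p(B). -/

import Mathlib

open MeasureTheory Set Relation Filter

namespace HP

noncomputable section

/-- An elementary cube in `ℝ^d` is encoded by, for each coordinate, an integer `l`
and a Boolean which is `true` for the nondegenerate interval `[l, l+1]` and
`false` for the degenerate interval `[l, l]`. -/
abbrev Cube (d : ℕ) := Fin d → ℤ × Bool

/-- The elementary interval `[l, l+1]` (nondegenerate) or `{l}` (degenerate). -/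
def intervalSet (l : ℤ) (b : Bool) : Set ℝ :=
  if b then Set.Icc (l : ℝ) ((l : ℝ) + 1) else {(l : ℝ)}

/-- The subset of `ℝ^d` realized by an encoded elementary cube. -/
def cubeSet {d : ℕ} (c : Cube d) : Set (Fin d → ℝ) :=
  {x | ∀ i, x i ∈ intervalSet (c i).1 (c i).2}

/-- The dimension of an elementary cube: the number of nondegenerate factors. -/
def cdim {d : ℕ} (c : Cube d) : ℕ :=
  (Finset.univ.filter (fun i => (c i).2 = true)).card

/-- A face in `ℝ^d` is an elementary cube of dimension `d-1`. -/
def IsFace {d : ℕ} (c : Cube d) : Prop := cdim c = d - 1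

/-- Two faces are adjacent if their intersection is an elementary cube of dimension `d-2`. -/
def FaceAdj {d : ℕ} (Q Q' : Cube d) : Prop :=
  ∃ c : Cube d, cdim c = d - 2 ∧ cubeSet Q ∩ cubeSet Q' = cubeSet c

/-- The type of faces in `ℝ^d`. -/
abbrev Face (d : ℕ) := {c : Cube d // IsFace c}

/-- The fixed face `Q₀ = [0,0] × [0,1]^(d-1)`. -/
def Q0 (d : ℕ) : Cube d := fun i => if (i : ℕ) = 0 then ((0 : ℤ), false) else ((0 : ℤ), true)

/-- A measure on `{0,1}^I` is the Bernoulli(p) product measure: it is a probability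
measure and cylinder events have the product probabilities. -/
def IsBernoulliProduct {I : Type*} (p : ℝ) (μ : Measure (I → Bool)) : Prop :=
  IsProbabilityMeasure μ ∧
    ∀ (s : Finset I) (b : I → Bool),
      μ {ω | ∀ i ∈ s, ω i = b i}
        = ∏ i ∈ s, (if b i = true then ENNReal.ofReal p else ENNReal.ofReal (1 - p))

/-- Open connectivity between faces: a chain of open, pairwise adjacent faces. -/
def faceOpenConn {d : ℕ} (ω : Face d → Bool) : Face d → Face d → Prop :=
  Relation.ReflTransGen (fun A B : Face d => FaceAdj A.1 B.1 ∧ ω A = true ∧ ω B = true)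

/-- The open face cluster of a face `Q` (empty when `Q` is closed). -/
def faceCluster {d : ℕ} (ω : Face d → Bool) (Q : Face d) : Set (Face d) :=
  {Q' | ω Q = true ∧ ω Q' = true ∧ faceOpenConn ω Q Q'}

/-- The random cubical set: the union of all open faces. -/
def K {d : ℕ} (ω : Face d → Bool) : Set (Fin d → ℝ) :=
  ⋃ (Q : Face d) (_ : ω Q = true), cubeSet Q.1

/-- The dual vertex `x* = x + (1/2, …, 1/2)`. -/
def dualPt {d : ℕ} (x : Fin d → ℤ) : Fin d → ℝ := fun i => (x i : ℝ) + 1/2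

/-- The connected component of the complement of `K(ω)` containing the dual vertex `x*`. -/
def holeAt {d : ℕ} (ω : Face d → Bool) (x : Fin d → ℤ) : Set (Fin d → ℝ) :=
  connectedComponentIn (K ω)ᶜ (dualPt x)

/-- A hole is a bounded connected component of the complement of `K(ω)`. -/
def IsHole {d : ℕ} (ω : Face d → Bool) (D : Set (Fin d → ℝ)) : Prop :=
  (∃ a ∈ (K ω)ᶜ, D = connectedComponentIn (K ω)ᶜ a) ∧ Bornology.IsBounded D

/-- The dual vertex `x*` lies in a hole. -/
def IsHolePt {d : ℕ} (ω : Face d → Bool) (x : Fin d → ℤ) : Prop :=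
  dualPt x ∈ (K ω)ᶜ ∧ Bornology.IsBounded (holeAt ω x)

/-- Two holes are adjacent when they share a common boundary face. -/
def HoleAdj {d : ℕ} (ω : Face d → Bool) (D D' : Set (Fin d → ℝ)) : Prop :=
  D ≠ D' ∧ ∃ Q : Cube d, IsFace Q ∧ cubeSet Q ⊆ frontier D ∧ cubeSet Q ⊆ frontier D'

/-- Connectivity in the hole graph. -/
def HoleConn {d : ℕ} (ω : Face d → Bool) :
    Set (Fin d → ℝ) → Set (Fin d → ℝ) → Prop :=
  Relation.ReflTransGen (fun A B => IsHole ω A ∧ IsHole ω B ∧ HoleAdj ω A B)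

/-- The hole cluster of a hole `D`: all holes connected to it in the hole graph. -/
def holeCluster {d : ℕ} (ω : Face d → Bool) (D : Set (Fin d → ℝ)) :
    Set (Set (Fin d → ℝ)) :=
  {D' | IsHole ω D' ∧ HoleConn ω D D'}

/-- The dual vertex `x*` lies in a hole belonging to an infinite hole cluster. -/
def InfClusterAt {d : ℕ} (ω : Face d → Bool) (x : Fin d → ℤ) : Prop :=
  IsHolePt ω x ∧ (holeCluster ω (holeAt ω x)).Infinite

/-- `x* ↔_hole y*` : both dual vertices lie in holes belonging to the same hole cluster. -/
def HoleConnPts {d : ℕ} (ω : Face d → Bool) (x y : Fin d → ℤ) : Prop :=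
  IsHolePt ω x ∧ IsHolePt ω y ∧ HoleConn ω (holeAt ω x) (holeAt ω y)

/-- A set of holes is an infinite hole cluster. -/
def IsInfCluster {d : ℕ} (ω : Face d → Bool) (G : Set (Set (Fin d → ℝ))) : Prop :=
  (∃ D, IsHole ω D ∧ G = holeCluster ω D) ∧ G.Infinite

/-- Nearest-neighbour adjacency on `ℤ^d` (ℓ¹-distance one). -/
def adjZ {d : ℕ} (x y : Fin d → ℤ) : Prop := (∑ i, |x i - y i|) = 1

/-- The occupied cell of the dual vertex `x*`: `∏ [(x*)_i - 1/2, (x*)_i + 1/2] = ∏ [x_i, x_i+1]`. -/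
def cell {d : ℕ} (x : Fin d → ℤ) : Set (Fin d → ℝ) :=
  {y | ∀ i, y i ∈ Set.Icc (x i : ℝ) ((x i : ℝ) + 1)}

/-- The face separating the occupied cells of two adjacent dual vertices. -/
def faceBetween {d : ℕ} (x y : Fin d → ℤ) : Cube d :=
  fun i => if x i = y i then (x i, true) else (max (x i) (y i), false)

/-- The dual bond between adjacent dual vertices is open iff the transversal face is closed. -/
def dualOpen {d : ℕ} (ω : Face d → Bool) (x y : Fin d → ℤ) : Prop :=
  adjZ x y ∧ ∀ Q : Face d, Q.1 = faceBetween x y → ω Q = false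

/-- The open dual cluster of a dual vertex. -/
def dualCluster {d : ℕ} (ω : Face d → Bool) (x : Fin d → ℤ) : Set (Fin d → ℤ) :=
  {y | Relation.ReflTransGen (dualOpen ω) x y}

/-- The box `B̃(n)` of dual vertices `x*` with `‖x*‖∞ < n`, indexed by `x ∈ ℤ^d`. -/
def BnZ (d n : ℕ) : Set (Fin d → ℤ) := {y | ∀ i, -(n:ℤ) ≤ y i ∧ y i < n}

/-- The hole at `x*` contains no dual vertex other than `x*`. -/
def SingletonHole {d : ℕ} (ω : Face d → Bool) (x : Fin d → ℤ) : Prop :=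
  IsHolePt ω x ∧ ∀ y : Fin d → ℤ, dualPt y ∈ holeAt ω x → y = x

/-- Hole-graph connectivity avoiding the hole `D`. -/
def HoleConnAvoid {d : ℕ} (ω : Face d → Bool) (D : Set (Fin d → ℝ)) :
    Set (Fin d → ℝ) → Set (Fin d → ℝ) → Prop :=
  Relation.ReflTransGen
    (fun A B => IsHole ω A ∧ IsHole ω B ∧ HoleAdj ω A B ∧ A ≠ D ∧ B ≠ D)

/-- The connected components of the hole cluster of `D` after deleting the vertex `D`. -/
def delComponents {d : ℕ} (ω : Face d → Bool) (D : Set (Fin d → ℝ)) :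
    Set (Set (Set (Fin d → ℝ))) :=
  {Kc | ∃ E, IsHole ω E ∧ E ∈ holeCluster ω D ∧ E ≠ D ∧
        Kc = {F | IsHole ω F ∧ HoleConnAvoid ω D E F}}

/-- `x*` is a trifurcation: its hole is a singleton hole lying in an infinite hole
cluster, and deleting it leaves exactly three components, all infinite. -/
def Trifurcation {d : ℕ} (ω : Face d → Bool) (x : Fin d → ℤ) : Prop :=
  SingletonHole ω x ∧ (holeCluster ω (holeAt ω x)).Infinite ∧
  (delComponents ω (holeAt ω x)).Finite ∧ (delComponents ω (holeAt ω x)).ncard = 3 ∧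
  ∀ Kc ∈ delComponents ω (holeAt ω x), Kc.Infinite

namespace FKGAux

variable {I : Type*}

def bcyl (s : Finset I) (b : I → Bool) : Set (I → Bool) := {ω | ∀ i ∈ s, ω i = b i}

lemma measurableSet_bcyl (s : Finset I) (b : I → Bool) : MeasurableSet (bcyl s b) := by
  have : bcyl s b = ⋂ i ∈ s, {ω : I → Bool | ω i = b i} := by ext; simp [bcyl]
  rw [this]
  refine MeasurableSet.biInter s.countable_toSet fun i _ => ?_
  have : {ω : I → Bool | ω i = b i} = (fun ω : I → Bool => ω i) ⁻¹' {b i} := rfl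
  rw [this]
  exact (measurable_pi_apply i) (measurableSet_singleton (b i))

lemma isPiSystem_bcyl :
    IsPiSystem {C : Set (I → Bool) | ∃ s b, C = bcyl s b} := by
  classical
  rintro _ ⟨s, b, rfl⟩ _ ⟨s', b', rfl⟩ hne
  obtain ⟨ω₀, hω₀⟩ := hne
  refine ⟨s ∪ s', fun i => if i ∈ s then b i else b' i, ?_⟩
  ext ω
  simp only [bcyl, Set.mem_inter_iff, Set.mem_setOf_eq, Finset.mem_union]
  constructor
  · rintro ⟨h1, h2⟩ i hi
    by_cases his : i ∈ s
    · simpa [his] using h1 i his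
    · rcases hi with hi | hi
      · exact absurd hi his
      · simpa [his] using h2 i hi
  · intro h
    refine ⟨fun i hi => by simpa [hi] using h i (Or.inl hi), fun i hi => ?_⟩
    by_cases his : i ∈ s
    · have h1 := h i (Or.inl his); rw [if_pos his] at h1
      have e : b i = b' i := by rw [← hω₀.1 i his, hω₀.2 i hi]
      rw [h1, e]
    · simpa [his] using h i (Or.inr hi)

lemma generateFrom_bcyl :
    MeasurableSpace.generateFrom {C : Set (I → Bool) | ∃ s b, C = bcyl s b} =
      (inferInstance : MeasurableSpace (I → Bool)) := by
  refine le_antisymm (MeasurableSpace.generateFrom_le ?_) ?_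
  · rintro _ ⟨s, b, rfl⟩; exact measurableSet_bcyl s b
  · rw [MeasurableSpace.pi_eq_generateFrom_projections]
    refine MeasurableSpace.generateFrom_le ?_
    rintro _ ⟨i, A, -, rfl⟩
    have : Function.eval i ⁻¹' A = ⋃ y ∈ A, bcyl {i} (fun _ => y) := by
      ext ω; simp [bcyl, Function.eval, eq_comm]
    rw [this]
    exact MeasurableSet.biUnion A.to_countable fun y _ =>
      MeasurableSpace.measurableSet_generateFrom ⟨{i}, fun _ => y, rfl⟩

/-- Two finite measures on a Boolean product agreeing on all exact cylinders and on `univ`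
are equal. -/
lemma ext_bcyl {μ ν : Measure (I → Bool)} [IsFiniteMeasure μ]
    (h : ∀ (s : Finset I) (b : I → Bool), μ (bcyl s b) = ν (bcyl s b))
    (huniv : μ Set.univ = ν Set.univ) : μ = ν := by
  refine ext_of_generate_finite _ generateFrom_bcyl.symm isPiSystem_bcyl ?_ huniv
  rintro _ ⟨s, b, rfl⟩; exact h s b


section Main
open scoped Classical

variable {S : Type*} {p : ℝ} {μ : Measure (S → Bool)}

/-- Paste together a configuration on `t` and one off `t`. -/
noncomputable def sect (t : Finset S) (x : (↥t → Bool) × ({s : S // s ∉ t} → Bool)) : S → Bool :=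
  fun s => if h : s ∈ t then x.1 ⟨s, h⟩ else x.2 ⟨s, h⟩

def res (t : Finset S) : (S → Bool) → (↥t → Bool) := fun ω i => ω i.1

def resC (t : Finset S) : (S → Bool) → ({s : S // s ∉ t} → Bool) := fun ω i => ω i.1

lemma measurable_res (t : Finset S) : Measurable (res t) :=
  measurable_pi_lambda _ fun i => measurable_pi_apply i.1

lemma measurable_resC (t : Finset S) : Measurable (resC t) :=
  measurable_pi_lambda _ fun i => measurable_pi_apply i.1

lemma measurable_sect (t : Finset S) : Measurable (sect t) := by
  refine measurable_pi_lambda _ fun s => ?_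
  unfold sect
  by_cases h : s ∈ t
  · simp only [dif_pos h]
    exact (measurable_pi_apply _).comp measurable_fst
  · simp only [dif_neg h]
    exact (measurable_pi_apply _).comp measurable_snd

/-- The first marginal. -/
noncomputable def nu1 (μ : Measure (S → Bool)) (t : Finset S) : Measure (↥t → Bool) :=
  Measure.map (res t) μ

/-- The second marginal. -/
noncomputable def nu2 (μ : Measure (S → Bool)) (t : Finset S) : Measure ({s : S // s ∉ t} → Bool) :=
  Measure.map (resC t) μ

def embIn (t s : Finset S) : ↥(s.filter (fun x => x ∈ t)) ↪ ↥t where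
  toFun i := ⟨i.1, (Finset.mem_filter.1 i.2).2⟩
  inj' a b h := by
    apply Subtype.ext
    have : (⟨a.1, (Finset.mem_filter.1 a.2).2⟩ : ↥t).1 = (⟨b.1, (Finset.mem_filter.1 b.2).2⟩ : ↥t).1 := congrArg Subtype.val h
    exact this

def embOut (t s : Finset S) : ↥(s.filter (fun x => x ∉ t)) ↪ {x : S // x ∉ t} where
  toFun i := ⟨i.1, (Finset.mem_filter.1 i.2).2⟩
  inj' a b h := by
    apply Subtype.ext
    have : (⟨a.1, (Finset.mem_filter.1 a.2).2⟩ : {x : S // x ∉ t}).1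
        = (⟨b.1, (Finset.mem_filter.1 b.2).2⟩ : {x : S // x ∉ t}).1 := congrArg Subtype.val h
    exact this

lemma sect_preimage_bcyl (t : Finset S) (s : Finset S) (b : S → Bool) :
    sect t ⁻¹' bcyl s b =
      (bcyl ((s.filter (fun x => x ∈ t)).attach.map (embIn t s)) (fun i => b i.1)) ×ˢ
      (bcyl ((s.filter (fun x => x ∉ t)).attach.map (embOut t s)) (fun i => b i.1)) := by
  ext ⟨a, τ⟩
  simp only [Set.mem_preimage, bcyl, Set.mem_setOf_eq, Set.mem_prod, Finset.mem_map,
    Finset.mem_attach, true_and, Finset.mem_filter, sect, embIn, embOut,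
    Function.Embedding.coeFn_mk]
  constructor
  · rintro h
    constructor
    · rintro j ⟨i, rfl⟩
      have := h i.1 (Finset.mem_filter.1 i.2).1
      rwa [dif_pos (Finset.mem_filter.1 i.2).2] at this
    · rintro j ⟨i, rfl⟩
      have := h i.1 (Finset.mem_filter.1 i.2).1
      rwa [dif_neg (Finset.mem_filter.1 i.2).2] at this
  · rintro ⟨h1, h2⟩ i hi
    by_cases hit : i ∈ t
    · rw [dif_pos hit]
      exact h1 _ ⟨⟨i, Finset.mem_filter.2 ⟨hi, hit⟩⟩, rfl⟩
    · rw [dif_neg hit]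
      exact h2 _ ⟨⟨i, Finset.mem_filter.2 ⟨hi, hit⟩⟩, rfl⟩

lemma res_preimage_bcyl_map (t : Finset S) (s : Finset S) (b : S → Bool) :
    res t ⁻¹' (bcyl ((s.filter (fun x => x ∈ t)).attach.map (embIn t s)) (fun i => b i.1))
      = bcyl (s.filter (fun x => x ∈ t)) b := by
  ext ω
  simp only [Set.mem_preimage, bcyl, Set.mem_setOf_eq, Finset.mem_map, Finset.mem_attach,
    true_and, res, embIn, Function.Embedding.coeFn_mk]
  constructor
  · intro h i hi
    exact h _ ⟨⟨i, hi⟩, rfl⟩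
  · rintro h j ⟨i, rfl⟩
    exact h i.1 i.2

lemma resC_preimage_bcyl_map (t : Finset S) (s : Finset S) (b : S → Bool) :
    resC t ⁻¹' (bcyl ((s.filter (fun x => x ∉ t)).attach.map (embOut t s)) (fun i => b i.1))
      = bcyl (s.filter (fun x => x ∉ t)) b := by
  ext ω
  simp only [Set.mem_preimage, bcyl, Set.mem_setOf_eq, Finset.mem_map, Finset.mem_attach,
    true_and, resC, embOut, Function.Embedding.coeFn_mk]
  constructor
  · intro h i hi
    exact h _ ⟨⟨i, hi⟩, rfl⟩
  · rintro h j ⟨i, rfl⟩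
    exact h i.1 i.2

lemma map_sect_eq (hμ : IsBernoulliProduct p μ) (t : Finset S) :
    Measure.map (sect t) ((nu1 μ t).prod (nu2 μ t)) = μ := by
  haveI := hμ.1
  haveI : IsProbabilityMeasure (nu1 μ t) :=
    Measure.isProbabilityMeasure_map (measurable_res t).aemeasurable
  haveI : IsProbabilityMeasure (nu2 μ t) :=
    Measure.isProbabilityMeasure_map (measurable_resC t).aemeasurable
  haveI : IsProbabilityMeasure (Measure.map (sect t) ((nu1 μ t).prod (nu2 μ t))) :=
    Measure.isProbabilityMeasure_map (measurable_sect t).aemeasurable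
  refine ext_bcyl (fun s b => ?_) (by simp [measure_univ])
  rw [Measure.map_apply (measurable_sect t) (measurableSet_bcyl s b),
    sect_preimage_bcyl, Measure.prod_prod, nu1, nu2,
    Measure.map_apply (measurable_res t) (measurableSet_bcyl _ _),
    Measure.map_apply (measurable_resC t) (measurableSet_bcyl _ _),
    res_preimage_bcyl_map, resC_preimage_bcyl_map]
  have h1 := hμ.2 (s.filter (fun x => x ∈ t)) b
  have h2 := hμ.2 (s.filter (fun x => x ∉ t)) b
  have h3 := hμ.2 s b
  rw [show bcyl (s.filter (fun x => x ∈ t)) b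
      = {ω : S → Bool | ∀ i ∈ s.filter (fun x => x ∈ t), ω i = b i} from rfl, h1,
    show bcyl (s.filter (fun x => x ∉ t)) b
      = {ω : S → Bool | ∀ i ∈ s.filter (fun x => x ∉ t), ω i = b i} from rfl, h2,
    show bcyl s b = {ω : S → Bool | ∀ i ∈ s, ω i = b i} from rfl, h3]
  exact Finset.prod_filter_mul_prod_filter_not s (fun x => x ∈ t) _

/-- Section map with first block fixed. -/
noncomputable def secL (t : Finset S) (a : ↥t → Bool) :
    ({s : S // s ∉ t} → Bool) → (S → Bool) := fun τ => sect t (a, τ)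

lemma measurable_secL (t : Finset S) (a : ↥t → Bool) : Measurable (secL t a) :=
  (measurable_sect t).comp measurable_prodMk_left

lemma res_sect (t : Finset S) (a : ↥t → Bool) (τ : {s : S // s ∉ t} → Bool) :
    res t (sect t (a, τ)) = a := by
  funext i
  simp only [res, sect, dif_pos i.2]

/-- The conditional probability of `A` given the configuration `a` on `t`. -/
noncomputable def GG (μ : Measure (S → Bool)) (t : Finset S) (A : Set (S → Bool)) :
    (↥t → Bool) → ℝ := fun a => (nu2 μ t (secL t a ⁻¹' A)).toReal

lemma GG_nonneg (t : Finset S) (A : Set (S → Bool)) : ∀ a, 0 ≤ GG μ t A a :=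
  fun _ => ENNReal.toReal_nonneg

lemma GG_le_one (hμ : IsBernoulliProduct p μ) (t : Finset S) (A : Set (S → Bool)) :
    ∀ a, GG μ t A a ≤ 1 := by
  haveI := hμ.1
  haveI : IsProbabilityMeasure (nu2 μ t) :=
    Measure.isProbabilityMeasure_map (measurable_resC t).aemeasurable
  intro a
  exact ENNReal.toReal_le_of_le_ofReal zero_le_one (by simpa using prob_le_one)

lemma GG_monotone (hμ : IsBernoulliProduct p μ) (t : Finset S) {A : Set (S → Bool)}
    (hup : ∀ ω ω' : S → Bool, (∀ s, ω s = true → ω' s = true) → ω ∈ A → ω' ∈ A) :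
    Monotone (GG μ t A) := by
  haveI := hμ.1
  haveI : IsProbabilityMeasure (nu2 μ t) :=
    Measure.isProbabilityMeasure_map (measurable_resC t).aemeasurable
  intro a a' haa'
  have hsub : secL t a ⁻¹' A ⊆ secL t a' ⁻¹' A := by
    intro τ hτ
    refine hup _ _ (fun s hs => ?_) hτ
    simp only [secL, sect] at hs ⊢
    by_cases h : s ∈ t
    · rw [dif_pos h] at hs ⊢
      have := haa' ⟨s, h⟩
      rw [Bool.le_iff_imp] at this
      exact this hs
    · rwa [dif_neg h] at hs ⊢
  refine ENNReal.toReal_le_toReal (measure_ne_top _ _) (measure_ne_top _ _) |>.2 ?_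
  exact measure_mono hsub

/-- Core identity: the measure of `A` intersected with a cylinder event. -/
lemma measure_inter_res (hμ : IsBernoulliProduct p μ) (t : Finset S)
    {A : Set (S → Bool)} (hA : MeasurableSet A) (D : Set (↥t → Bool)) :
    μ (A ∩ res t ⁻¹' D)
      = ∑ a : ↥t → Bool,
          D.indicator (fun a => nu2 μ t (secL t a ⁻¹' A)) a * nu1 μ t {a} := by
  haveI := hμ.1
  haveI : IsProbabilityMeasure (nu2 μ t) :=
    Measure.isProbabilityMeasure_map (measurable_resC t).aemeasurable
  have hDm : MeasurableSet D := D.to_countable.measurableSet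
  conv_lhs => rw [← map_sect_eq hμ t]
  rw [Measure.map_apply (measurable_sect t)
    (hA.inter ((measurable_res t) hDm))]
  have hpre : sect t ⁻¹' (A ∩ res t ⁻¹' D) = (sect t ⁻¹' A) ∩ D ×ˢ Set.univ := by
    ext ⟨a, τ⟩
    simp only [Set.mem_preimage, Set.mem_inter_iff, Set.mem_prod, Set.mem_univ, and_true]
    rw [res_sect]
  rw [hpre, Measure.prod_apply (((measurable_sect t) hA).inter (hDm.prod MeasurableSet.univ))]
  rw [lintegral_fintype]
  congr 1
  funext a
  congr 1
  have : Prod.mk a ⁻¹' (sect t ⁻¹' A ∩ D ×ˢ Set.univ)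
      = if a ∈ D then secL t a ⁻¹' A else ∅ := by
    by_cases haD : a ∈ D
    · simp only [if_pos haD]
      ext τ
      simp [secL, haD]
    · simp only [if_neg haD]
      ext τ
      simp [secL, haD]
  rw [this]
  by_cases haD : a ∈ D
  · rw [if_pos haD, Set.indicator_of_mem haD]
  · rw [if_neg haD, Set.indicator_of_notMem haD, measure_empty]

lemma integral_comp_res (hμ : IsBernoulliProduct p μ) (t : Finset S)
    (h : (↥t → Bool) → ℝ) :
    ∫ ω, h (res t ω) ∂μ = ∑ a : ↥t → Bool, (nu1 μ t {a}).toReal * h a := by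
  haveI := hμ.1
  haveI : IsProbabilityMeasure (nu1 μ t) :=
    Measure.isProbabilityMeasure_map (measurable_res t).aemeasurable
  rw [← integral_map (measurable_res t).aemeasurable
    (measurable_of_countable h).aestronglyMeasurable]
  rw [show Measure.map (res t) μ = nu1 μ t from rfl]
  rw [integral_fintype Integrable.of_finite]
  simp only [smul_eq_mul, measureReal_def]

lemma sum_nu1_singleton (hμ : IsBernoulliProduct p μ) (t : Finset S) :
    ∑ a : ↥t → Bool, (nu1 μ t {a}).toReal = 1 := by
  haveI := hμ.1
  haveI : IsProbabilityMeasure (nu1 μ t) :=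
    Measure.isProbabilityMeasure_map (measurable_res t).aemeasurable
  have := integral_comp_res hμ t (fun _ => (1 : ℝ))
  rw [integral_const, probReal_univ, one_smul] at this
  simp only [mul_one] at this
  exact this.symm

/-- The weight of a single configuration on `t` is a Bernoulli product weight. -/
lemma nu1_singleton (hp0 : 0 ≤ p) (hp1 : p ≤ 1) (hμ : IsBernoulliProduct p μ)
    (t : Finset S) (a : ↥t → Bool) :
    (nu1 μ t {a}).toReal = ∏ i : ↥t, (if a i = true then p else 1 - p) := by
  classical
  have hpre : res t ⁻¹' {a} = bcyl t (fun s => if h : s ∈ t then a ⟨s, h⟩ else true) := by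
    ext ω
    simp only [Set.mem_preimage, Set.mem_singleton_iff, bcyl, Set.mem_setOf_eq]
    constructor
    · rintro rfl i hi
      rw [dif_pos hi]; rfl
    · intro h
      funext i
      have := h i.1 i.2
      rwa [dif_pos i.2] at this
  rw [nu1, Measure.map_apply (measurable_res t) (measurableSet_singleton a), hpre]
  rw [show bcyl t (fun s => if h : s ∈ t then a ⟨s, h⟩ else true)
      = {ω : S → Bool | ∀ i ∈ t, ω i = if h : i ∈ t then a ⟨i, h⟩ else true} from rfl,
    hμ.2 t _]
  rw [ENNReal.toReal_prod]
  rw [← Finset.prod_attach t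
    (fun i => ((if (if h : i ∈ t then a ⟨i, h⟩ else true) = true then ENNReal.ofReal p
      else ENNReal.ofReal (1 - p))).toReal), ← Finset.univ_eq_attach]
  refine Finset.prod_congr rfl fun i _ => ?_
  rw [dif_pos i.2]
  have : (⟨(i : S), i.2⟩ : ↥t) = i := Subtype.ext rfl
  rw [this]
  by_cases h : a i = true
  · rw [if_pos h, if_pos h, ENNReal.toReal_ofReal hp0]
  · rw [if_neg h, if_neg h, ENNReal.toReal_ofReal (by linarith)]

lemma weight_lattice (hp0 : 0 ≤ p) (hp1 : p ≤ 1) (hμ : IsBernoulliProduct p μ)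
    (t : Finset S) (a b : ↥t → Bool) :
    (nu1 μ t {a}).toReal * (nu1 μ t {b}).toReal
      ≤ (nu1 μ t {a ⊓ b}).toReal * (nu1 μ t {a ⊔ b}).toReal := by
  rw [nu1_singleton hp0 hp1 hμ, nu1_singleton hp0 hp1 hμ, nu1_singleton hp0 hp1 hμ,
    nu1_singleton hp0 hp1 hμ, ← Finset.prod_mul_distrib, ← Finset.prod_mul_distrib]
  refine le_of_eq (Finset.prod_congr rfl fun i _ => ?_)
  rw [Pi.inf_apply, Pi.sup_apply]
  rcases le_total (a i) (b i) with h | h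
  · rw [inf_eq_left.2 h, sup_eq_right.2 h]
  · rw [inf_eq_right.2 h, sup_eq_left.2 h, mul_comm]

lemma mu_toReal_eq_sum (hμ : IsBernoulliProduct p μ) (t : Finset S)
    {A : Set (S → Bool)} (hA : MeasurableSet A) :
    (μ A).toReal = ∑ a : ↥t → Bool, (nu1 μ t {a}).toReal * GG μ t A a := by
  haveI := hμ.1
  haveI : IsProbabilityMeasure (nu1 μ t) :=
    Measure.isProbabilityMeasure_map (measurable_res t).aemeasurable
  haveI : IsProbabilityMeasure (nu2 μ t) :=
    Measure.isProbabilityMeasure_map (measurable_resC t).aemeasurable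
  have := measure_inter_res hμ t hA (Set.univ)
  rw [Set.preimage_univ, Set.inter_univ, Set.indicator_univ] at this
  rw [this, ENNReal.toReal_sum (fun a _ => ENNReal.mul_ne_top
    (measure_ne_top _ _) (measure_ne_top _ _))]
  refine Finset.sum_congr rfl fun a _ => ?_
  rw [ENNReal.toReal_mul, mul_comm]
  rfl

lemma fkg_step (hp0 : 0 ≤ p) (hp1 : p ≤ 1) (hμ : IsBernoulliProduct p μ) (t : Finset S)
    {A B : Set (S → Bool)} (hA : MeasurableSet A) (hB : MeasurableSet B)
    (hAup : ∀ ω ω' : S → Bool, (∀ s, ω s = true → ω' s = true) → ω ∈ A → ω' ∈ A)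
    (hBup : ∀ ω ω' : S → Bool, (∀ s, ω s = true → ω' s = true) → ω ∈ B → ω' ∈ B) :
    (μ A).toReal * (μ B).toReal
      ≤ ∫ ω, GG μ t A (res t ω) * GG μ t B (res t ω) ∂μ := by
  haveI := hμ.1
  rw [mu_toReal_eq_sum hμ t hA, mu_toReal_eq_sum hμ t hB,
    integral_comp_res hμ t (fun a => GG μ t A a * GG μ t B a)]
  have h := fkg (μ := fun a : ↥t → Bool => (nu1 μ t {a}).toReal)
    (f := GG μ t A) (g := GG μ t B)
    (Pi.le_def.2 fun a => ENNReal.toReal_nonneg)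
    (Pi.le_def.2 fun a => GG_nonneg t A a)
    (Pi.le_def.2 fun a => GG_nonneg t B a)
    (GG_monotone hμ t hAup) (GG_monotone hμ t hBup)
    (weight_lattice hp0 hp1 hμ t)
  rwa [sum_nu1_singleton hμ t, one_mul] at h

lemma comap_res_le (t : Finset S) :
    MeasurableSpace.comap (res t) inferInstance
      ≤ (inferInstance : MeasurableSpace (S → Bool)) :=
  (measurable_res t).comap_le

lemma comap_res_mono {t t' : Finset S} (h : t ⊆ t') :
    MeasurableSpace.comap (res t) inferInstance
      ≤ MeasurableSpace.comap (res t') inferInstance := by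
  have heq : res (S := S) t = (fun (a : ↥t' → Bool) (i : ↥t) => a ⟨i.1, h i.2⟩) ∘ res t' := rfl
  rw [heq, ← MeasurableSpace.comap_comp]
  refine MeasurableSpace.comap_mono ?_
  exact measurable_iff_comap_le.1 (measurable_pi_lambda _ fun i => measurable_pi_apply _)

lemma integrable_GG_res (hμ : IsBernoulliProduct p μ) (t : Finset S) (A : Set (S → Bool)) :
    Integrable (fun ω => GG μ t A (res t ω)) μ := by
  haveI := hμ.1
  have hmeas : Measurable fun ω => GG μ t A (res t ω) :=
    (measurable_of_countable (GG μ t A)).comp (measurable_res t)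
  refine Integrable.mono' (integrable_const (1 : ℝ)) hmeas.aestronglyMeasurable ?_
  refine Filter.Eventually.of_forall fun ω => ?_
  rw [Real.norm_eq_abs, abs_of_nonneg (GG_nonneg t A _)]
  exact GG_le_one hμ t A _

lemma setIntegral_GG_res (hμ : IsBernoulliProduct p μ) (t : Finset S)
    {A : Set (S → Bool)} (hA : MeasurableSet A) (D : Set (↥t → Bool)) :
    ∫ ω in res t ⁻¹' D, GG μ t A (res t ω) ∂μ = (μ (A ∩ res t ⁻¹' D)).toReal := by
  haveI := hμ.1
  haveI : IsProbabilityMeasure (nu1 μ t) :=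
    Measure.isProbabilityMeasure_map (measurable_res t).aemeasurable
  haveI : IsProbabilityMeasure (nu2 μ t) :=
    Measure.isProbabilityMeasure_map (measurable_resC t).aemeasurable
  have hDm : MeasurableSet D := D.to_countable.measurableSet
  rw [← integral_indicator ((measurable_res t) hDm)]
  have hcomp : (res t ⁻¹' D).indicator (fun ω => GG μ t A (res t ω))
      = fun ω => (D.indicator (GG μ t A)) (res t ω) := by
    funext ω
    by_cases h : res t ω ∈ D
    · rw [Set.indicator_of_mem (by exact h), Set.indicator_of_mem h]
    · rw [Set.indicator_of_notMem (by exact h), Set.indicator_of_notMem h]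
  rw [hcomp, integral_comp_res hμ t, measure_inter_res hμ t hA D,
    ENNReal.toReal_sum (fun a _ => ENNReal.mul_ne_top
      (by by_cases h : a ∈ D
          · rw [Set.indicator_of_mem h]; exact measure_ne_top _ _
          · rw [Set.indicator_of_notMem h]; exact ENNReal.zero_ne_top)
      (measure_ne_top _ _))]
  refine Finset.sum_congr rfl fun a _ => ?_
  rw [ENNReal.toReal_mul, mul_comm]
  by_cases h : a ∈ D
  · rw [Set.indicator_of_mem h, Set.indicator_of_mem h]; rfl
  · rw [Set.indicator_of_notMem h, Set.indicator_of_notMem h, ENNReal.toReal_zero]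

lemma condexp_eq_GG (hμ : IsBernoulliProduct p μ) (t : Finset S)
    {A : Set (S → Bool)} (hA : MeasurableSet A) :
    (fun ω => GG μ t A (res t ω))
      =ᵐ[μ] μ[A.indicator (fun _ => (1 : ℝ)) | MeasurableSpace.comap (res t) inferInstance] := by
  haveI := hμ.1
  have hm := comap_res_le t
  refine ae_eq_condExp_of_forall_setIntegral_eq hm
    ((integrable_const (1 : ℝ)).indicator hA) ?_ ?_ ?_
  · exact fun s _ _ => (integrable_GG_res hμ t A).integrableOn
  · rintro s ⟨D, hDm, rfl⟩ -
    rw [setIntegral_GG_res hμ t hA D, setIntegral_indicator hA, setIntegral_const, smul_eq_mul,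
      mul_one, Set.inter_comm, measureReal_def]
  · exact StronglyMeasurable.aestronglyMeasurable
      (Measurable.stronglyMeasurable
        ((measurable_of_countable (GG μ t A)).comp (Measurable.of_comap_le le_rfl)))

end Main
end FKGAux

open FKGAux Topology in
/-- FKG/Harris inequality for events: in the Bernoulli(p) product
space over a countable index set `S`, increasing events are positively
correlated: `P(A ∩ B) ≥ P(A)·P(B)`. -/
theorem fkg_increasing_events {S : Type*} [Countable S] (p : ℝ)
    (hp0 : 0 ≤ p) (hp1 : p ≤ 1)
    (μ : Measure (S → Bool)) (hμ : IsBernoulliProduct p μ)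
    (A B : Set (S → Bool)) (hA : MeasurableSet A) (hB : MeasurableSet B)
    (hAup : ∀ ω ω' : S → Bool, (∀ s, ω s = true → ω' s = true) → ω ∈ A → ω' ∈ A)
    (hBup : ∀ ω ω' : S → Bool, (∀ s, ω s = true → ω' s = true) → ω ∈ B → ω' ∈ B) :
    μ A * μ B ≤ μ (A ∩ B) := by
  classical
  haveI := hμ.1
  obtain ⟨f, hf⟩ := Countable.exists_injective_nat S
  have hfin : ∀ n : ℕ, (f ⁻¹' Set.Iio n).Finite :=
    fun n => Set.Finite.preimage (Function.Injective.injOn hf) (Set.finite_Iio n)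
  let tn : ℕ → Finset S := fun n => (hfin n).toFinset
  have htn_mono : ∀ {n m : ℕ}, n ≤ m → tn n ⊆ tn m := by
    intro n m hnm i hi
    have h1 := (hfin n).mem_toFinset.1 hi
    exact (hfin m).mem_toFinset.2 (lt_of_lt_of_le h1 hnm)
  let F : MeasureTheory.Filtration ℕ (inferInstance : MeasurableSpace (S → Bool)) :=
    { seq := fun n => MeasurableSpace.comap (res (tn n)) inferInstance
      mono' := fun n m hnm => comap_res_mono (htn_mono hnm)
      le' := fun n => comap_res_le (tn n) }
  have hsup : (⨆ n, F n) = (inferInstance : MeasurableSpace (S → Bool)) := by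
    refine le_antisymm (iSup_le fun n => comap_res_le _) ?_
    have key : ∀ s : S, @Measurable _ _ (⨆ n, F n) _ (fun ω : S → Bool => ω s) := by
      intro s
      have hmem : s ∈ tn (f s + 1) := (hfin _).mem_toFinset.2 (Nat.lt_succ_self _)
      have h1 : @Measurable _ _ (F (f s + 1)) _ (fun ω : S → Bool => ω s) := by
        have heq : (fun ω : S → Bool => ω s)
            = (fun a : ↥(tn (f s + 1)) → Bool => a ⟨s, hmem⟩) ∘ res (tn (f s + 1)) := rfl
        rw [heq]
        exact (measurable_pi_apply _).comp (Measurable.of_comap_le le_rfl)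
      exact h1.mono (le_iSup F.seq (f s + 1)) le_rfl
    refine le_trans (le_of_eq MeasurableSpace.pi_eq_generateFrom_projections)
      (MeasurableSpace.generateFrom_le ?_)
    rintro _ ⟨s, Aset, hAset, rfl⟩
    exact key s hAset
  set iA : (S → Bool) → ℝ := A.indicator (fun _ => 1) with hiA
  set iB : (S → Bool) → ℝ := B.indicator (fun _ => 1) with hiB
  have hiAint : Integrable iA μ := (integrable_const 1).indicator hA
  have hiBint : Integrable iB μ := (integrable_const 1).indicator hB
  have hiAsm : StronglyMeasurable[⨆ n, F n] iA := by
    rw [hsup]; exact stronglyMeasurable_const.indicator hA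
  have hiBsm : StronglyMeasurable[⨆ n, F n] iB := by
    rw [hsup]; exact stronglyMeasurable_const.indicator hB
  have hlevyA := hiAint.tendsto_eLpNorm_condExp hiAsm
  have hlevyB := hiBint.tendsto_eLpNorm_condExp hiBsm
  set XA : ℕ → (S → Bool) → ℝ := fun n ω => GG μ (tn n) A (res (tn n) ω) with hXAdef
  set XB : ℕ → (S → Bool) → ℝ := fun n ω => GG μ (tn n) B (res (tn n) ω) with hXBdef
  have hXAeq : ∀ n, XA n =ᵐ[μ] μ[iA | F n] := fun n => condexp_eq_GG hμ (tn n) hA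
  have hXBeq : ∀ n, XB n =ᵐ[μ] μ[iB | F n] := fun n => condexp_eq_GG hμ (tn n) hB
  have herrA : Tendsto (fun n => eLpNorm (XA n - iA) 1 μ) atTop (𝓝 0) := by
    refine hlevyA.congr fun n => ?_
    exact eLpNorm_congr_ae (((hXAeq n).symm).sub (Filter.EventuallyEq.refl _ _))
  have herrB : Tendsto (fun n => eLpNorm (XB n - iB) 1 μ) atTop (𝓝 0) := by
    refine hlevyB.congr fun n => ?_
    exact eLpNorm_congr_ae (((hXBeq n).symm).sub (Filter.EventuallyEq.refl _ _))
  have hne : ∀ n, eLpNorm (XA n - iA) 1 μ ≠ ⊤ := by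
    intro n
    have h1 : Integrable (XA n - iA) μ := (integrable_GG_res hμ (tn n) A).sub hiAint
    exact (memLp_one_iff_integrable.2 h1).2.ne
  have hneB : ∀ n, eLpNorm (XB n - iB) 1 μ ≠ ⊤ := by
    intro n
    have h1 : Integrable (XB n - iB) μ := (integrable_GG_res hμ (tn n) B).sub hiBint
    exact (memLp_one_iff_integrable.2 h1).2.ne
  have herrA' : Tendsto (fun n => (eLpNorm (XA n - iA) 1 μ).toReal) atTop (𝓝 0) := by
    have := (ENNReal.tendsto_toReal (by simp)).comp herrA
    simpa [Function.comp_def] using this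
  have herrB' : Tendsto (fun n => (eLpNorm (XB n - iB) 1 μ).toReal) atTop (𝓝 0) := by
    have := (ENNReal.tendsto_toReal (by simp)).comp herrB
    simpa [Function.comp_def] using this
  -- the integral of the product of indicators
  have hABint : ∫ ω, iA ω * iB ω ∂μ = (μ (A ∩ B)).toReal := by
    have heq : (fun ω => iA ω * iB ω) = (A ∩ B).indicator (fun _ => (1 : ℝ)) := by
      funext ω
      rw [hiA, hiB]
      by_cases h1 : ω ∈ A <;> by_cases h2 : ω ∈ B <;>
        simp [Set.indicator_apply, h1, h2, Set.mem_inter_iff]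
    rw [heq, integral_indicator_const _ (hA.inter hB), smul_eq_mul, mul_one, measureReal_def]
  -- abs bounds
  have keyabs : ∀ (X Y a b : ℝ), |Y| ≤ 1 → |a| ≤ 1 → |X * Y - a * b| ≤ |X - a| + |Y - b| := by
    intro X Y a b hY ha
    have h1 : X * Y - a * b = (X - a) * Y + a * (Y - b) := by ring
    rw [h1]
    refine (abs_add_le _ _).trans ?_
    rw [abs_mul, abs_mul]
    nlinarith [abs_nonneg (X - a), abs_nonneg (Y - b), abs_nonneg Y, abs_nonneg a]
  have hiAbd : ∀ ω, |iA ω| ≤ 1 := by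
    intro ω; rw [hiA]
    by_cases h : ω ∈ A <;> simp [Set.indicator_apply, h]
  have hXBbd : ∀ n ω, |XB n ω| ≤ 1 := by
    intro n ω
    rw [abs_of_nonneg (GG_nonneg _ _ _)]
    exact GG_le_one hμ _ _ _
  -- integral identities for absolute errors
  have habsA : ∀ n, ∫ ω, |XA n ω - iA ω| ∂μ = (eLpNorm (XA n - iA) 1 μ).toReal := by
    intro n
    have hint : Integrable (XA n - iA) μ := (integrable_GG_res hμ (tn n) A).sub hiAint
    rw [eLpNorm_one_eq_lintegral_enorm,
      ← integral_norm_eq_lintegral_enorm hint.aestronglyMeasurable]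
    simp only [Pi.sub_apply, Real.norm_eq_abs]
  have habsB : ∀ n, ∫ ω, |XB n ω - iB ω| ∂μ = (eLpNorm (XB n - iB) 1 μ).toReal := by
    intro n
    have hint : Integrable (XB n - iB) μ := (integrable_GG_res hμ (tn n) B).sub hiBint
    rw [eLpNorm_one_eq_lintegral_enorm,
      ← integral_norm_eq_lintegral_enorm hint.aestronglyMeasurable]
    simp only [Pi.sub_apply, Real.norm_eq_abs]
  have hbound : ∀ n, |∫ ω, XA n ω * XB n ω ∂μ - (μ (A ∩ B)).toReal|
      ≤ (eLpNorm (XA n - iA) 1 μ).toReal + (eLpNorm (XB n - iB) 1 μ).toReal := by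
    intro n
    have hXAint := integrable_GG_res hμ (tn n) A
    have hXBint := integrable_GG_res hμ (tn n) B
    have hXAm : Measurable (XA n) :=
      (measurable_of_countable (GG μ (tn n) A)).comp (measurable_res (tn n))
    have hXBm : Measurable (XB n) :=
      (measurable_of_countable (GG μ (tn n) B)).comp (measurable_res (tn n))
    have hprodint : Integrable (fun ω => XA n ω * XB n ω) μ := by
      refine Integrable.mono' (integrable_const (1 : ℝ))
        (hXAm.mul hXBm).aestronglyMeasurable (Filter.Eventually.of_forall fun ω => ?_)
      rw [Real.norm_eq_abs, abs_mul]
      have h1 : |XA n ω| ≤ 1 := by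
        rw [abs_of_nonneg (GG_nonneg _ _ _)]; exact GG_le_one hμ _ _ _
      have h2 := hXBbd n ω
      nlinarith [abs_nonneg (XA n ω), abs_nonneg (XB n ω)]
    have hiprodint : Integrable (fun ω => iA ω * iB ω) μ := by
      refine Integrable.mono' (integrable_const (1 : ℝ))
        (hiAint.1.mul hiBint.1) (Filter.Eventually.of_forall fun ω => ?_)
      rw [Real.norm_eq_abs, abs_mul]
      have h1 := hiAbd ω
      have h2 : |iB ω| ≤ 1 := by
        rw [hiB]; by_cases h : ω ∈ B <;> simp [Set.indicator_apply, h]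
      nlinarith [abs_nonneg (iA ω), abs_nonneg (iB ω)]
    have hdiffint : Integrable (fun ω => XA n ω * XB n ω - iA ω * iB ω) μ :=
      hprodint.sub hiprodint
    have hintabsA : Integrable (fun ω => |XA n ω - iA ω|) μ :=
      ((hXAint.sub hiAint).norm).congr (Filter.Eventually.of_forall fun ω => by
        simp [Real.norm_eq_abs, hXAdef])
    have hintabsB : Integrable (fun ω => |XB n ω - iB ω|) μ :=
      ((hXBint.sub hiBint).norm).congr (Filter.Eventually.of_forall fun ω => by
        simp [Real.norm_eq_abs, hXBdef])
    calc |∫ ω, XA n ω * XB n ω ∂μ - (μ (A ∩ B)).toReal|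
        = |∫ ω, (XA n ω * XB n ω - iA ω * iB ω) ∂μ| := by
          rw [integral_sub hprodint hiprodint, hABint]
      _ ≤ ∫ ω, |XA n ω * XB n ω - iA ω * iB ω| ∂μ := by
          have := norm_integral_le_integral_norm (fun ω => XA n ω * XB n ω - iA ω * iB ω) (μ := μ)
          simpa [Real.norm_eq_abs] using this
      _ ≤ ∫ ω, (|XA n ω - iA ω| + |XB n ω - iB ω|) ∂μ := by
          refine integral_mono hdiffint.abs (hintabsA.add hintabsB) fun ω => ?_
          exact keyabs _ _ _ _ (hXBbd n ω) (hiAbd ω)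
      _ = ∫ ω, |XA n ω - iA ω| ∂μ + ∫ ω, |XB n ω - iB ω| ∂μ :=
          integral_add hintabsA hintabsB
      _ = (eLpNorm (XA n - iA) 1 μ).toReal + (eLpNorm (XB n - iB) 1 μ).toReal := by
          rw [habsA n, habsB n]
  have hconv : Tendsto (fun n => ∫ ω, XA n ω * XB n ω ∂μ) atTop
      (𝓝 ((μ (A ∩ B)).toReal)) := by
    rw [tendsto_iff_dist_tendsto_zero]
    refine squeeze_zero (fun n => dist_nonneg) (fun n => ?_) (by simpa using herrA'.add herrB')
    rw [Real.dist_eq]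
    exact hbound n
  have hge : ∀ n, (μ A).toReal * (μ B).toReal ≤ ∫ ω, XA n ω * XB n ω ∂μ :=
    fun n => fkg_step hp0 hp1 hμ (tn n) hA hB hAup hBup
  have hfinal : (μ A).toReal * (μ B).toReal ≤ (μ (A ∩ B)).toReal :=
    ge_of_tendsto hconv (Filter.Eventually.of_forall hge)
  rw [← ENNReal.toReal_mul] at hfinal
  exact (ENNReal.toReal_le_toReal (ENNReal.mul_ne_top (measure_ne_top μ A) (measure_ne_top μ B))
    (measure_ne_top μ (A ∩ B))).1 hfinal

end
end HP
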